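/- Let d ≥ 3 and let H₁ = (V,E₁,ℓ₁), H₂ = (V,E₂,ℓ₂) be d-regular graphs with self-loops such that E₁ ⊆ E₂ and E₂∖E₁ ⊆ E(S, V∖S) for some S ⊆ V. Then for every t ≥ 1, Pr[a t-step lazy random walk in H₁ started uniformly in S stays in S for all t steps] ≤ Pr[a t-step lazy random walk in H₂ started uniformly in S stays in S for all t steps] + t·|E₂∖E₁|/(2d|S|). -/
import Mathlib


open Finset Matrix

/-- Let `d ≥ 3` and let `H₁ = (V,E₁,ℓ₁)`, `H₂ = (V,E₂,ℓ₂)` be `d`-regular graphs with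
self-loops (adjacency matrices `A₁`, `A₂` with row sums `d`, diagonal entries counting
self-loops) such that `E₁ ⊆ E₂` and `E₂∖E₁ ⊆ E(S, V∖S)` for some `S ⊆ V`.  Then for every
`t ≥ 1`, the probability that a `t`-step lazy random walk in `H₁` started uniformly in `S`
stays in `S` for all `t` steps is at most the corresponding probability for `H₂` plus
`t·|E₂∖E₁|/(2d|S|)`.  Here the staying probability for adjacency matrix `A` is
`1_S^T (P·M)^t 1_S / |S|` with `M = (1/2)I + (1/(2d))A`, `P = diag(1_S)`, and
`|E₂∖E₁| = ∑_{u∈S, v∉S} (A₂ u v − A₁ u v)`. -/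
theorem lazy_walk_subgraph_comparison
    {V : Type*} [Fintype V] [DecidableEq V]
    (d : ℕ) (hd : 3 ≤ d)
    (A₁ A₂ : Matrix V V ℝ)
    (hsym₁ : A₁.IsSymm) (hsym₂ : A₂.IsSymm)
    (hnn₁ : ∀ u v, 0 ≤ A₁ u v) (hnn₂ : ∀ u v, 0 ≤ A₂ u v)
    (hreg₁ : ∀ u, ∑ v, A₁ u v = d) (hreg₂ : ∀ u, ∑ v, A₂ u v = d)
    (S : Finset V) (hS : S.Nonempty)
    (hle : ∀ u v, u ≠ v → A₁ u v ≤ A₂ u v)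
    (hcross : ∀ u v, u ≠ v → A₁ u v ≠ A₂ u v →
        (u ∈ S ∧ v ∉ S) ∨ (u ∉ S ∧ v ∈ S))
    (t : ℕ) (ht : 1 ≤ t) :
    let M₁ : Matrix V V ℝ := (1 / 2 : ℝ) • (1 : Matrix V V ℝ) + (1 / (2 * d) : ℝ) • A₁
    let M₂ : Matrix V V ℝ := (1 / 2 : ℝ) • (1 : Matrix V V ℝ) + (1 / (2 * d) : ℝ) • A₂
    let P : Matrix V V ℝ := Matrix.diagonal (fun v => if v ∈ S then (1 : ℝ) else 0)
    let indS : V → ℝ := fun v => if v ∈ S then (1 : ℝ) else 0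
    let excess : ℝ := ∑ u ∈ S, ∑ v ∈ Sᶜ, (A₂ u v - A₁ u v)
    (indS ⬝ᵥ ((P * M₁) ^ t).mulVec indS) / S.card
      ≤ (indS ⬝ᵥ ((P * M₂) ^ t).mulVec indS) / S.card + t * excess / (2 * d * S.card) := by
  intro M₁ M₂ P indS excess
  classical
  have hM₁ : M₁ = (1 / 2 : ℝ) • (1 : Matrix V V ℝ) + (1 / (2 * d) : ℝ) • A₁ := rfl
  have hM₂ : M₂ = (1 / 2 : ℝ) • (1 : Matrix V V ℝ) + (1 / (2 * d) : ℝ) • A₂ := rfl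
  have hP : P = Matrix.diagonal (fun v => if v ∈ S then (1 : ℝ) else 0) := rfl
  have hindS : indS = fun v => if v ∈ S then (1 : ℝ) else 0 := rfl
  have hexcess : excess = ∑ u ∈ S, ∑ v ∈ Sᶜ, (A₂ u v - A₁ u v) := rfl
  have hd0 : (0:ℝ) < d := by
    have : (3:ℝ) ≤ d := by exact_mod_cast hd
    linarith
  have hScard : (0:ℝ) < S.card := by exact_mod_cast Finset.card_pos.mpr hS
  set c : ℝ := 1 / (2 * d) * excess with hc
  set B₁ : Matrix V V ℝ := P * M₁ * P with hB₁
  set B₂ : Matrix V V ℝ := P * M₂ * P with hB₂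
  -- indicator in [0,1]
  have hind : ∀ u, 0 ≤ indS u ∧ indS u ≤ 1 := by
    intro u; rw [hindS]; by_cases h : u ∈ S <;> simp [h]
  -- P * P = P and P *ᵥ indS = indS
  have hPP : P * P = P := by
    rw [hP, Matrix.diagonal_mul_diagonal]
    ext u v
    by_cases h : u ∈ S <;> simp [Matrix.diagonal_apply, h]
  have hPind : P *ᵥ indS = indS := by
    funext v
    rw [hP, hindS]
    simp only [Matrix.mulVec_diagonal]
    by_cases h : v ∈ S <;> simp [h]
  have hPvec : ∀ x : V → ℝ, (∀ u, 0 ≤ x u ∧ x u ≤ 1) →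
      ∀ u, 0 ≤ (P *ᵥ x) u ∧ (P *ᵥ x) u ≤ 1 := by
    intro x hx u
    rw [hP]
    simp only [Matrix.mulVec_diagonal]
    by_cases h : u ∈ S
    · simpa [h] using hx u
    · simp [h]
  -- facts about M (nonneg entries, row sums 1)
  have hMfacts : ∀ (A : Matrix V V ℝ), (∀ u v, 0 ≤ A u v) → (∀ u, ∑ v, A u v = d) →
      (∀ u v, 0 ≤ ((1 / 2 : ℝ) • (1 : Matrix V V ℝ) + (1 / (2 * d) : ℝ) • A) u v) ∧
      (∀ u, ∑ v, ((1 / 2 : ℝ) • (1 : Matrix V V ℝ) + (1 / (2 * d) : ℝ) • A) u v = 1) := by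
    intro A hnn hreg
    constructor
    · intro u v
      have h1 : (0:ℝ) ≤ 1 / (2 * d) * A u v := by
        apply mul_nonneg _ (hnn u v)
        positivity
      simp only [Matrix.add_apply, Matrix.smul_apply, Matrix.one_apply, smul_eq_mul]
      by_cases h : u = v
      · rw [if_pos h]; linarith
      · rw [if_neg h]; rw [mul_zero, zero_add]; exact h1
    · intro u
      have h2 : ∑ v, (1 : Matrix V V ℝ) u v = 1 := by
        simp [Matrix.one_apply]
      simp only [Matrix.add_apply, Matrix.smul_apply, smul_eq_mul]
      rw [Finset.sum_add_distrib, ← Finset.mul_sum, ← Finset.mul_sum, h2, hreg]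
      field_simp
      ring
  have hMvec : ∀ (M : Matrix V V ℝ), (∀ u v, 0 ≤ M u v) → (∀ u, ∑ v, M u v = 1) →
      ∀ x : V → ℝ, (∀ u, 0 ≤ x u ∧ x u ≤ 1) → ∀ u, 0 ≤ (M *ᵥ x) u ∧ (M *ᵥ x) u ≤ 1 := by
    intro M hnn hrow x hx u
    have he : (M *ᵥ x) u = ∑ v, M u v * x v := rfl
    rw [he]
    constructor
    · exact Finset.sum_nonneg fun v _ => mul_nonneg (hnn u v) (hx v).1
    · calc ∑ v, M u v * x v ≤ ∑ v, M u v * 1 :=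
            Finset.sum_le_sum fun v _ => mul_le_mul_of_nonneg_left (hx v).2 (hnn u v)
        _ = 1 := by simpa using hrow u
  have hB₁vec : ∀ x : V → ℝ, (∀ u, 0 ≤ x u ∧ x u ≤ 1) →
      ∀ u, 0 ≤ (B₁ *ᵥ x) u ∧ (B₁ *ᵥ x) u ≤ 1 := by
    intro x hx
    have : B₁ *ᵥ x = P *ᵥ (M₁ *ᵥ (P *ᵥ x)) := by
      rw [Matrix.mulVec_mulVec, Matrix.mulVec_mulVec, hB₁]
    rw [this]
    exact hPvec _ (hMvec M₁ (hMfacts A₁ hnn₁ hreg₁).1 (hMfacts A₁ hnn₁ hreg₁).2 _ (hPvec x hx))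
  have hB₂vec : ∀ x : V → ℝ, (∀ u, 0 ≤ x u ∧ x u ≤ 1) →
      ∀ u, 0 ≤ (B₂ *ᵥ x) u ∧ (B₂ *ᵥ x) u ≤ 1 := by
    intro x hx
    have : B₂ *ᵥ x = P *ᵥ (M₂ *ᵥ (P *ᵥ x)) := by
      rw [Matrix.mulVec_mulVec, Matrix.mulVec_mulVec, hB₂]
    rw [this]
    exact hPvec _ (hMvec M₂ (hMfacts A₂ hnn₂ hreg₂).1 (hMfacts A₂ hnn₂ hreg₂).2 _ (hPvec x hx))
  have hpow₂ : ∀ n : ℕ, ∀ u, 0 ≤ ((B₂ ^ n) *ᵥ indS) u ∧ ((B₂ ^ n) *ᵥ indS) u ≤ 1 := by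
    intro n
    induction n with
    | zero => simpa [Matrix.one_mulVec] using hind
    | succ k ih =>
      have : (B₂ ^ (k+1)) *ᵥ indS = B₂ *ᵥ ((B₂ ^ k) *ᵥ indS) := by
        rw [Matrix.mulVec_mulVec, ← pow_succ']
      rw [this]
      exact hB₂vec _ ih
  -- symmetry
  have hPt : Pᵀ = P := by rw [hP, Matrix.diagonal_transpose]
  have hsymB₁ : B₁ᵀ = B₁ := by
    have hMt : M₁ᵀ = M₁ := by
      rw [hM₁, Matrix.transpose_add, Matrix.transpose_smul, Matrix.transpose_smul,
        Matrix.transpose_one, hsym₁.eq]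
    rw [hB₁, Matrix.transpose_mul, Matrix.transpose_mul, hMt, hPt, mul_assoc]
  have hdot : ∀ (B : Matrix V V ℝ), Bᵀ = B → ∀ x y : V → ℝ,
      x ⬝ᵥ B *ᵥ y = (B *ᵥ x) ⬝ᵥ y := by
    intro B hB x y
    rw [Matrix.dotProduct_mulVec, ← Matrix.mulVec_transpose, hB]
  -- structure of the difference B₁ - B₂
  have hinS : ∀ u v, u ∈ S → v ∈ S → u ≠ v → A₁ u v = A₂ u v := by
    intro u v hu hv huv
    by_contra h
    rcases hcross u v huv h with ⟨_, hv'⟩ | ⟨hu', _⟩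
    exacts [hv' hv, hu' hu]
  have hdiagS : ∀ u ∈ S, A₁ u u - A₂ u u = ∑ v ∈ Sᶜ, (A₂ u v - A₁ u v) := by
    intro u hu
    have h1 : ∑ v ∈ Finset.univ.erase u, (A₂ u v - A₁ u v)
        = ∑ v ∈ Sᶜ, (A₂ u v - A₁ u v) := by
      symm
      apply Finset.sum_subset
      · intro v hv
        exact Finset.mem_erase.mpr
          ⟨fun h => (Finset.mem_compl.mp hv) (h ▸ hu), Finset.mem_univ v⟩
      · intro v hv hvn
        have hvS : v ∈ S := by
          by_contra h; exact hvn (Finset.mem_compl.mpr h)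
        have hvu : v ≠ u := (Finset.mem_erase.mp hv).1
        rw [hinS u v hu hvS (Ne.symm hvu)]; ring
    have h2 : ∑ v, (A₂ u v - A₁ u v) = 0 := by
      rw [Finset.sum_sub_distrib, hreg₂ u, hreg₁ u]; ring
    rw [← Finset.add_sum_erase _ _ (Finset.mem_univ u)] at h2
    rw [← h1]; linarith
  have hediff : ∀ u ∈ S, (0:ℝ) ≤ ∑ v ∈ Sᶜ, (A₂ u v - A₁ u v) := by
    intro u hu
    exact Finset.sum_nonneg fun v hv =>
      sub_nonneg.mpr (hle u v fun h => (Finset.mem_compl.mp hv) (h ▸ hu))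
  have hcnn : 0 ≤ c := by
    rw [hc, hexcess]
    apply mul_nonneg (by positivity)
    exact Finset.sum_nonneg fun u hu => hediff u hu
  have hdiff : ∀ u v, B₁ u v - B₂ u v
      = if u = v ∧ u ∈ S then 1 / (2 * d) * (A₁ u u - A₂ u u) else 0 := by
    intro u v
    have e1 : B₁ u v - B₂ u v
        = (if u ∈ S then (1:ℝ) else 0) * (1 / (2 * d) * (A₁ u v - A₂ u v))
            * (if v ∈ S then (1:ℝ) else 0) := by
      rw [hB₁, hB₂, hP]
      rw [Matrix.mul_diagonal, Matrix.mul_diagonal, Matrix.diagonal_mul, Matrix.diagonal_mul,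
        hM₁, hM₂]
      simp only [Matrix.add_apply, Matrix.smul_apply, Matrix.one_apply, smul_eq_mul]
      ring
    rw [e1]
    by_cases hu : u ∈ S
    · by_cases hv : v ∈ S
      · by_cases huv : u = v
        · subst huv; simp [hu]
        · rw [hinS u v hu hv huv]
          simp [huv]
      · have : ¬ (u = v ∧ u ∈ S) := fun ⟨h, _⟩ => hv (h ▸ hu)
        simp [hv, this]
    · have : ¬ (u = v ∧ u ∈ S) := fun ⟨_, h⟩ => hu h
      simp [hu, this]
  have hquad : ∀ (B : Matrix V V ℝ) (x y : V → ℝ),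
      x ⬝ᵥ B *ᵥ y = ∑ u, ∑ v, x u * (B u v * y v) := by
    intro B x y
    simp only [dotProduct, Matrix.mulVec, Finset.mul_sum]
  have hEbound : ∀ x y : V → ℝ, (∀ u, 0 ≤ x u ∧ x u ≤ 1) → (∀ u, 0 ≤ y u ∧ y u ≤ 1) →
      x ⬝ᵥ B₁ *ᵥ y ≤ x ⬝ᵥ B₂ *ᵥ y + c := by
    intro x y hx hy
    have hds : x ⬝ᵥ B₁ *ᵥ y - x ⬝ᵥ B₂ *ᵥ y = ∑ u, ∑ v, x u * ((B₁ u v - B₂ u v) * y v) := by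
      rw [hquad B₁ x y, hquad B₂ x y, ← Finset.sum_sub_distrib]
      apply Finset.sum_congr rfl; intro u _
      rw [← Finset.sum_sub_distrib]
      apply Finset.sum_congr rfl; intro v _; ring
    have hsum : ∑ u, ∑ v, x u * ((B₁ u v - B₂ u v) * y v) ≤ c := by
      calc ∑ u, ∑ v, x u * ((B₁ u v - B₂ u v) * y v)
          ≤ ∑ u, ∑ v, (if u = v ∧ u ∈ S then 1 / (2 * d) * (A₁ u u - A₂ u u) else 0) := by
            apply Finset.sum_le_sum; intro u _
            apply Finset.sum_le_sum; intro v _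
            rw [hdiff u v]
            by_cases h : u = v ∧ u ∈ S
            · obtain ⟨huv, hu⟩ := h
              subst huv
              rw [if_pos (⟨rfl, hu⟩ : u = u ∧ u ∈ S)]
              have hq : (0:ℝ) ≤ 1 / (2 * d) * (A₁ u u - A₂ u u) := by
                apply mul_nonneg (by positivity)
                rw [hdiagS u hu]; exact hediff u hu
              have hxy : x u * y u ≤ 1 :=
                mul_le_one₀ (hx u).2 (hy u).1 (hy u).2
              have hxy0 : 0 ≤ x u * y u := mul_nonneg (hx u).1 (hy u).1
              nlinarith [mul_le_mul_of_nonneg_left hxy hq]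
            · simp [h]
        _ = ∑ u, (if u ∈ S then 1 / (2 * d) * (A₁ u u - A₂ u u) else 0) := by
            apply Finset.sum_congr rfl; intro u _
            by_cases hu : u ∈ S
            · simp [hu, Finset.sum_ite_eq]
            · simp [hu]
        _ = c := by
            rw [Finset.sum_ite_mem, Finset.univ_inter, hc, hexcess, Finset.mul_sum]
            apply Finset.sum_congr rfl; intro u hu
            rw [hdiagS u hu]
    linarith
  -- relating (P*M)^t to (P*M*P)^t
  have hPMP : ∀ (M : Matrix V V ℝ) (n : ℕ), 1 ≤ n → (P * M) ^ n * P = (P * M * P) ^ n := by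
    intro M n hn
    induction n with
    | zero => omega
    | succ k ih =>
      rcases Nat.lt_or_ge 1 (k + 1) with h | h
      · have hk : 1 ≤ k := by omega
        have hstep : P * (P * M * P) = P * M * P := by
          rw [← mul_assoc, ← mul_assoc, hPP]
        rw [pow_succ, pow_succ, ← ih hk, mul_assoc ((P * M) ^ k) (P * M) P,
          mul_assoc ((P * M) ^ k) P (P * M * P), hstep]
      · have : k = 0 := by omega
        subst this
        simp [pow_one]
  have hstart : ∀ (M : Matrix V V ℝ),
      indS ⬝ᵥ ((P * M) ^ t) *ᵥ indS = indS ⬝ᵥ ((P * M * P) ^ t) *ᵥ indS := by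
    intro M
    rw [← hPMP M t ht, ← Matrix.mulVec_mulVec, hPind]
  -- the main induction
  have key : ∀ (n : ℕ) (x : V → ℝ), (∀ u, 0 ≤ x u ∧ x u ≤ 1) →
      x ⬝ᵥ (B₁ ^ n) *ᵥ indS ≤ x ⬝ᵥ (B₂ ^ n) *ᵥ indS + n * c := by
    intro n
    induction n with
    | zero => intro x hx; simp
    | succ k ih =>
      intro x hx
      have h1 : x ⬝ᵥ (B₁ ^ (k+1)) *ᵥ indS = (B₁ *ᵥ x) ⬝ᵥ ((B₁ ^ k) *ᵥ indS) := by
        rw [pow_succ', ← Matrix.mulVec_mulVec, hdot B₁ hsymB₁]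
      have h2 := ih (B₁ *ᵥ x) (hB₁vec x hx)
      have h3 : (B₁ *ᵥ x) ⬝ᵥ ((B₂ ^ k) *ᵥ indS) = x ⬝ᵥ B₁ *ᵥ ((B₂ ^ k) *ᵥ indS) :=
        (hdot B₁ hsymB₁ x _).symm
      have h4 := hEbound x ((B₂ ^ k) *ᵥ indS) hx (hpow₂ k)
      have h5 : x ⬝ᵥ B₂ *ᵥ ((B₂ ^ k) *ᵥ indS) = x ⬝ᵥ (B₂ ^ (k+1)) *ᵥ indS := by
        rw [Matrix.mulVec_mulVec, ← pow_succ']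
      push_cast
      rw [h1]
      linarith
  have hkey := key t indS hind
  calc (indS ⬝ᵥ ((P * M₁) ^ t) *ᵥ indS) / S.card
      = (indS ⬝ᵥ (B₁ ^ t) *ᵥ indS) / S.card := by rw [hstart M₁, ← hB₁]
    _ ≤ (indS ⬝ᵥ (B₂ ^ t) *ᵥ indS + t * c) / S.card := by
        gcongr
    _ = (indS ⬝ᵥ ((P * M₂) ^ t) *ᵥ indS) / S.card + t * excess / (2 * d * S.card) := by
        rw [hB₂, ← hstart M₂, add_div, hc]
        congr 1
        field_simp
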